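/- Let E = {φ₁,…,φₙ} be an eigenfamily on a semi-Riemannian manifold M (τ(φᵢ) = λφᵢ, κ(φᵢ,φⱼ) = μφᵢφⱼ), and let P, Q : ℂⁿ → ℂ be homogeneous polynomials of the same degree d ≥ 1. Set 𝑃 = P(φ₁,…,φₙ) and 𝑄 = Q(φ₁,…,φₙ). Then τ(𝑃) = (dλ + d(d-1)μ)𝑃, τ(𝑄) = (dλ + d(d-1)μ)𝑄, κ(𝑃,𝑃) = d²μ𝑃², κ(𝑃,𝑄) = d²μ𝑃𝑄, κ(𝑄,𝑄) = d²μ𝑄², and hence 𝑄²κ(𝑃,𝑃) = 𝑃𝑄κ(𝑃,𝑄) = 𝑃²κ(𝑄,𝑄). -/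

import Mathlib

theorem stmt18 {A : Type*} [CommRing A] [Algebra ℂ A]
    (tau : A → A) (kappa : A → A → A)
    (hsymm : ∀ f g : A, kappa f g = kappa g f)
    (htau_prod : ∀ f g : A, tau (f * g) = tau f * g + 2 * kappa f g + f * tau g)
    (hder : ∀ f g h : A, kappa (f * g) h = f * kappa g h + g * kappa f h)
    (htau_lin : ∀ (c : ℂ) (f g : A), tau (c • f + g) = c • tau f + tau g)
    (hkap_lin : ∀ (c : ℂ) (f g h : A), kappa (c • f + g) h = c • kappa f h + kappa g h)
    (n : ℕ) (φ : Fin n → A) (lam mu : ℂ)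
    (hτ : ∀ i, tau (φ i) = lam • φ i)
    (hκ : ∀ i j, kappa (φ i) (φ j) = mu • (φ i * φ j))
    (d : ℕ) (hd : 1 ≤ d)
    (a b : (Fin d → Fin n) → ℂ)
    (P Q : A)
    (hP : P = ∑ f : Fin d → Fin n, a f • ∏ j, φ (f j))
    (hQ : Q = ∑ f : Fin d → Fin n, b f • ∏ j, φ (f j)) :
    tau P = ((d : ℂ) * lam + (d : ℂ) * ((d : ℂ) - 1) * mu) • P ∧
    tau Q = ((d : ℂ) * lam + (d : ℂ) * ((d : ℂ) - 1) * mu) • Q ∧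
    kappa P P = ((d : ℂ) ^ 2 * mu) • (P * P) ∧
    kappa P Q = ((d : ℂ) ^ 2 * mu) • (P * Q) ∧
    kappa Q Q = ((d : ℂ) ^ 2 * mu) • (Q * Q) ∧
    Q ^ 2 * kappa P P = P * Q * kappa P Q ∧
    P * Q * kappa P Q = P ^ 2 * kappa Q Q := by
  -- tau 0 = 0
  have htau0 : tau 0 = 0 := by
    simpa using htau_lin 1 0 0
  -- kappa 0 y = 0
  have hk0 : ∀ y : A, kappa 0 y = 0 := by
    intro y
    simpa using hkap_lin 1 0 0 y
  -- tau additive / smul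
  have htau_add : ∀ f g : A, tau (f + g) = tau f + tau g := by
    intro f g
    have h := htau_lin 1 f g
    simpa using h
  have htau_smul : ∀ (c : ℂ) (f : A), tau (c • f) = c • tau f := by
    intro c f
    have h := htau_lin c f 0
    simpa [htau0] using h
  have hk_add : ∀ f g y : A, kappa (f + g) y = kappa f y + kappa g y := by
    intro f g y
    have h := hkap_lin 1 f g y
    simpa using h
  have hk_smul : ∀ (c : ℂ) (f y : A), kappa (c • f) y = c • kappa f y := by
    intro c f y
    have h := hkap_lin c f 0 y
    simpa [hk0] using h
  -- sums
  have hk_sum : ∀ (s : Finset (Fin d → Fin n)) (F : (Fin d → Fin n) → A) (y : A),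
      kappa (∑ i ∈ s, F i) y = ∑ i ∈ s, kappa (F i) y := by
    intro s F y
    induction s using Finset.induction_on with
    | empty => simp [hk0]
    | insert _ _ hmem ih => rw [Finset.sum_insert hmem, hk_add, ih, Finset.sum_insert hmem]
  have ht_sum : ∀ (s : Finset (Fin d → Fin n)) (F : (Fin d → Fin n) → A),
      tau (∑ i ∈ s, F i) = ∑ i ∈ s, tau (F i) := by
    intro s F
    induction s using Finset.induction_on with
    | empty => simp [htau0]
    | insert _ _ hmem ih => rw [Finset.sum_insert hmem, htau_add, ih, Finset.sum_insert hmem]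
  -- kappa 1 y = 0
  have hk1 : ∀ y : A, kappa 1 y = 0 := by
    intro y
    have h := hder 1 1 y
    simp at h
    exact h
  -- key derivation lemma for monomials
  have K1 : ∀ (m : ℕ) (f : Fin m → Fin n) (y : A) (c : ℂ),
      (∀ i, kappa (φ i) y = c • (φ i * y)) →
      kappa (∏ j, φ (f j)) y = ((m : ℂ) * c) • ((∏ j, φ (f j)) * y) := by
    intro m
    induction m with
    | zero => intro f y c hy; simp [hk1]
    | succ m ih =>
      intro f y c hy
      rw [Fin.prod_univ_succ, hder, ih (fun j => f j.succ) y c hy, hy]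
      simp only [Algebra.smul_def, map_mul, map_add, map_one, map_natCast]
      push_cast
      ring
  -- tau of monomial
  have Tmono : ∀ (m : ℕ) (f : Fin m → Fin n),
      tau (∏ j, φ (f j)) =
        ((m : ℂ) * lam + (m : ℂ) * ((m : ℂ) - 1) * mu) • (∏ j, φ (f j)) := by
    intro m
    induction m with
    | zero =>
      intro f
      have h := htau_prod 1 1
      simp [hk1] at h
      simpa using h
    | succ m ih =>
      intro f
      rw [Fin.prod_univ_succ, htau_prod, ih (fun j => f j.succ), hτ]
      have hk : kappa (φ (f 0)) (∏ j : Fin m, φ (f j.succ)) =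
          ((m : ℂ) * mu) • (φ (f 0) * ∏ j : Fin m, φ (f j.succ)) := by
        rw [hsymm, K1 m (fun j => f j.succ) (φ (f 0)) mu (fun i => hκ i (f 0))]
        rw [mul_comm (∏ j : Fin m, φ (f j.succ)) (φ (f 0))]
      rw [hk]
      simp only [Algebra.smul_def, map_mul, map_add, map_one, map_natCast, map_sub]
      push_cast
      ring
  -- kappa of two monomials
  have Kmono : ∀ (f g : Fin d → Fin n),
      kappa (∏ j, φ (f j)) (∏ j, φ (g j)) =
        ((d : ℂ) ^ 2 * mu) • ((∏ j, φ (f j)) * (∏ j, φ (g j))) := by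
    intro f g
    have hy : ∀ i, kappa (φ i) (∏ j, φ (g j)) = ((d : ℂ) * mu) • (φ i * ∏ j, φ (g j)) := by
      intro i
      rw [hsymm, K1 d g (φ i) mu (fun k => hκ k i)]
      rw [mul_comm (∏ j, φ (g j)) (φ i)]
    rw [K1 d f _ _ hy]
    congr 1
    ring
  -- expansion of kappa over sums
  have kexp : ∀ (u v : (Fin d → Fin n) → ℂ),
      kappa (∑ f : Fin d → Fin n, u f • ∏ j, φ (f j))
            (∑ f : Fin d → Fin n, v f • ∏ j, φ (f j)) =
      ((d : ℂ) ^ 2 * mu) • ((∑ f : Fin d → Fin n, u f • ∏ j, φ (f j)) *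
        (∑ f : Fin d → Fin n, v f • ∏ j, φ (f j))) := by
    intro u v
    rw [hk_sum, Finset.sum_mul_sum, Finset.smul_sum]
    refine Finset.sum_congr rfl (fun f _ => ?_)
    rw [hk_smul]
    have hrow : kappa (∏ j, φ (f j)) (∑ g : Fin d → Fin n, v g • ∏ j, φ (g j)) =
        ∑ g : Fin d → Fin n, v g • kappa (∏ j, φ (f j)) (∏ j, φ (g j)) := by
      rw [hsymm, hk_sum]
      refine Finset.sum_congr rfl (fun g _ => ?_)
      rw [hk_smul, hsymm]
    rw [hrow, Finset.smul_sum, Finset.smul_sum]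
    refine Finset.sum_congr rfl (fun g _ => ?_)
    rw [Kmono f g]
    simp only [smul_smul, smul_mul_assoc, mul_smul_comm]
    congr 1
    ring
  -- tau over sums
  have texp : ∀ (u : (Fin d → Fin n) → ℂ),
      tau (∑ f : Fin d → Fin n, u f • ∏ j, φ (f j)) =
        ((d : ℂ) * lam + (d : ℂ) * ((d : ℂ) - 1) * mu) •
          (∑ f : Fin d → Fin n, u f • ∏ j, φ (f j)) := by
    intro u
    rw [ht_sum, Finset.smul_sum]
    refine Finset.sum_congr rfl (fun f _ => ?_)
    rw [htau_smul, Tmono d f, smul_smul, smul_smul, mul_comm]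
  have hTP := hP ▸ texp a
  have hTQ := hQ ▸ texp b
  have hPP : kappa P P = ((d : ℂ) ^ 2 * mu) • (P * P) := by rw [hP]; exact kexp a a
  have hPQ : kappa P Q = ((d : ℂ) ^ 2 * mu) • (P * Q) := by rw [hP, hQ]; exact kexp a b
  have hQQ : kappa Q Q = ((d : ℂ) ^ 2 * mu) • (Q * Q) := by rw [hQ]; exact kexp b b
  refine ⟨hTP, hTQ, hPP, hPQ, hQQ, ?_, ?_⟩
  · rw [hPP, hPQ, mul_smul_comm, mul_smul_comm]; ring_nf
  · rw [hPQ, hQQ, mul_smul_comm, mul_smul_comm]; ring_nf
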